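/- Consider a d-simplex σ with all vertices on the unit sphere S^d ⊂ ℝ^{d+1}, and suppose its Euclidean diameter δ satisfies δ ≤ √(2(d+1)/d). Then for any point x in the convex hull of the vertices of σ (with x ≠ 0), we have ‖x − x/‖x‖‖ ≤ 1 − √(1 − (1/2)·(d/(d+1))·δ²). -/

import Mathlib

/-- Lemma: for a `d`-simplex `σ` with vertices on the unit sphere `S^d ⊂ ℝ^{d+1}` and Euclidean
diameter `δ ≤ √(2(d+1)/d)`, every point `x ≠ 0` of the convex hull of its vertices satisfies
`‖x - x/‖x‖‖ ≤ 1 - √(1 - (1/2)(d/(d+1))δ²)`. -/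
theorem radial_proj_simplex (d : ℕ) (hd : 1 ≤ d)
    (v : Fin (d + 1) → EuclideanSpace ℝ (Fin (d + 1)))
    (hindep : AffineIndependent ℝ v)
    (hsphere : ∀ i, ‖v i‖ = 1)
    (δ : ℝ)
    (hdiam : ∀ i j, ‖v i - v j‖ ≤ δ)
    (hδ : δ ≤ Real.sqrt (2 * ((d : ℝ) + 1) / d))
    (x : EuclideanSpace ℝ (Fin (d + 1)))
    (hx : x ∈ convexHull ℝ (Set.range v)) (hx0 : x ≠ 0) :
    ‖x - ‖x‖⁻¹ • x‖ ≤ 1 - Real.sqrt (1 - 1 / 2 * ((d : ℝ) / (d + 1)) * δ ^ 2) := by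
  have hδ0 : 0 ≤ δ := le_trans (norm_nonneg _) (hdiam 0 0)
  have hd1 : (0 : ℝ) < (d : ℝ) + 1 := by positivity
  -- ‖x‖ ≤ 1
  have hr1 : ‖x‖ ≤ 1 := by
    have hsub : Set.range v ⊆ Metric.closedBall (0 : EuclideanSpace ℝ (Fin (d + 1))) 1 := by
      rintro _ ⟨i, rfl⟩
      simp [Metric.mem_closedBall, dist_zero_right, hsphere i]
    have := convexHull_min hsub (convex_closedBall _ _) hx
    simpa [Metric.mem_closedBall, dist_zero_right] using this
  have hr0 : 0 < ‖x‖ := norm_pos_iff.mpr hx0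
  -- get weights
  rw [convexHull_range_eq_exists_affineCombination] at hx
  obtain ⟨s, w, hw0, hw1, hxeq⟩ := hx
  rw [Finset.affineCombination_eq_linear_combination s v w hw1] at hxeq
  -- inner products
  have hinner : ∀ i j, (inner ℝ (v i) (v j) : ℝ) = 1 - ‖v i - v j‖ ^ 2 / 2 := by
    intro i j
    have := norm_sub_sq_real (v i) (v j)
    rw [hsphere i, hsphere j] at this
    linarith
  -- norm squared expansion
  have hnorm : ‖x‖ ^ 2 = ∑ i ∈ s, ∑ j ∈ s, w i * w j * (inner ℝ (v i) (v j) : ℝ) := by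
    rw [← real_inner_self_eq_norm_sq, ← hxeq, sum_inner]
    refine Finset.sum_congr rfl fun i _ => ?_
    rw [inner_sum]
    refine Finset.sum_congr rfl fun j _ => ?_
    rw [real_inner_smul_left, real_inner_smul_right]
    ring
  have hnorm2 : ‖x‖ ^ 2 =
      1 - (∑ i ∈ s, ∑ j ∈ s, w i * w j * ‖v i - v j‖ ^ 2) / 2 := by
    rw [hnorm]
    have : ∀ i ∈ s, ∀ j ∈ s, w i * w j * (inner ℝ (v i) (v j) : ℝ)
        = w i * w j - w i * w j * ‖v i - v j‖ ^ 2 / 2 := by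
      intro i _ j _; rw [hinner i j]; ring
    calc ∑ i ∈ s, ∑ j ∈ s, w i * w j * (inner ℝ (v i) (v j) : ℝ)
        = ∑ i ∈ s, ∑ j ∈ s, (w i * w j - w i * w j * ‖v i - v j‖ ^ 2 / 2) := by
          refine Finset.sum_congr rfl fun i hi => Finset.sum_congr rfl fun j hj => ?_
          exact this i hi j hj
      _ = (∑ i ∈ s, ∑ j ∈ s, w i * w j)
          - (∑ i ∈ s, ∑ j ∈ s, w i * w j * ‖v i - v j‖ ^ 2) / 2 := by
          simp only [Finset.sum_sub_distrib, Finset.sum_div]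
      _ = 1 - (∑ i ∈ s, ∑ j ∈ s, w i * w j * ‖v i - v j‖ ^ 2) / 2 := by
          rw [← Finset.sum_mul_sum, hw1, one_mul]
  -- sum of squares lower bound
  have hsq : 1 / ((d : ℝ) + 1) ≤ ∑ i ∈ s, w i ^ 2 := by
    have hcs : (∑ i ∈ s, w i) ^ 2 ≤ (s.card : ℝ) * ∑ i ∈ s, w i ^ 2 :=
      sq_sum_le_card_mul_sum_sq
    rw [hw1, one_pow] at hcs
    have hcard : (s.card : ℝ) ≤ (d : ℝ) + 1 := by
      have := s.card_le_univ
      simp only [Finset.card_univ, Fintype.card_fin] at this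
      exact_mod_cast this
    have hsum_sq_nonneg : 0 ≤ ∑ i ∈ s, w i ^ 2 :=
      Finset.sum_nonneg fun i _ => sq_nonneg _
    have : 1 ≤ ((d : ℝ) + 1) * ∑ i ∈ s, w i ^ 2 :=
      hcs.trans (mul_le_mul_of_nonneg_right hcard hsum_sq_nonneg)
    rw [div_le_iff₀ hd1]
    linarith [this]
  -- bound the double sum
  have hS : (∑ i ∈ s, ∑ j ∈ s, w i * w j * ‖v i - v j‖ ^ 2)
      ≤ δ ^ 2 * (1 - ∑ i ∈ s, w i ^ 2) := by
    have key : ∀ i ∈ s, ∀ j ∈ s, w i * w j * ‖v i - v j‖ ^ 2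
        ≤ δ ^ 2 * (w i * w j) - (if j = i then δ ^ 2 * (w i * w j) else 0) := by
      intro i hi j hj
      by_cases h : j = i
      · subst h; simp
      · simp only [if_neg h]
        have h1 : ‖v i - v j‖ ^ 2 ≤ δ ^ 2 := by
          have := hdiam i j
          nlinarith [norm_nonneg (v i - v j)]
        have h2 : 0 ≤ w i * w j := mul_nonneg (hw0 i hi) (hw0 j hj)
        nlinarith
    calc (∑ i ∈ s, ∑ j ∈ s, w i * w j * ‖v i - v j‖ ^ 2)
        ≤ ∑ i ∈ s, ∑ j ∈ s,
            (δ ^ 2 * (w i * w j) - (if j = i then δ ^ 2 * (w i * w j) else 0)) := by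
          refine Finset.sum_le_sum fun i hi => Finset.sum_le_sum fun j hj => key i hi j hj
      _ = δ ^ 2 * (1 - ∑ i ∈ s, w i ^ 2) := by
          simp only [Finset.sum_sub_distrib]
          have e1 : ∀ i ∈ s, (∑ j ∈ s, (if j = i then δ ^ 2 * (w i * w j) else 0))
              = δ ^ 2 * w i ^ 2 := by
            intro i hi
            rw [Finset.sum_ite_eq' s i (fun j => δ ^ 2 * (w i * w j)), if_pos hi]
            ring
          rw [Finset.sum_congr rfl e1]
          have e2 : (∑ i ∈ s, ∑ j ∈ s, δ ^ 2 * (w i * w j)) = δ ^ 2 := by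
            have expand : (∑ i ∈ s, ∑ j ∈ s, δ ^ 2 * (w i * w j))
                = δ ^ 2 * ((s.sum w) * (s.sum w)) := by
              rw [Finset.sum_mul_sum, Finset.mul_sum]
              refine Finset.sum_congr rfl fun i _ => ?_
              rw [Finset.mul_sum]
            rw [expand, hw1]
            ring
          rw [e2, ← Finset.mul_sum]
          ring
  -- combine: lower bound on ‖x‖²
  have hxsq : 1 - 1 / 2 * ((d : ℝ) / (d + 1)) * δ ^ 2 ≤ ‖x‖ ^ 2 := by
    rw [hnorm2]
    have h1 : (1 : ℝ) - ∑ i ∈ s, w i ^ 2 ≤ (d : ℝ) / (d + 1) := by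
      have hdd : (d : ℝ) / (d + 1) = 1 - 1 / (d + 1) := by
        field_simp
        ring
      rw [hdd]
      linarith [hsq]
    have h2 : δ ^ 2 * (1 - ∑ i ∈ s, w i ^ 2) ≤ δ ^ 2 * ((d : ℝ) / (d + 1)) :=
      mul_le_mul_of_nonneg_left h1 (sq_nonneg δ)
    nlinarith [hS]
  have hsqrt : Real.sqrt (1 - 1 / 2 * ((d : ℝ) / (d + 1)) * δ ^ 2) ≤ ‖x‖ := by
    calc Real.sqrt (1 - 1 / 2 * ((d : ℝ) / (d + 1)) * δ ^ 2)
        ≤ Real.sqrt (‖x‖ ^ 2) := Real.sqrt_le_sqrt hxsq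
      _ = ‖x‖ := Real.sqrt_sq (norm_nonneg x)
  -- rewrite LHS
  have hlhs : ‖x - ‖x‖⁻¹ • x‖ = 1 - ‖x‖ := by
    have h1 : x - ‖x‖⁻¹ • x = (1 - ‖x‖⁻¹) • x := by
      rw [sub_smul, one_smul]
    rw [h1, norm_smul, Real.norm_eq_abs]
    rw [← abs_of_nonneg (norm_nonneg x), ← abs_mul]
    rw [abs_of_nonneg (norm_nonneg x)]
    rw [sub_mul, one_mul, inv_mul_cancel₀ hr0.ne']
    rw [abs_of_nonpos (by linarith)]
    ring
  rw [hlhs]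
  linarith [hsqrt]
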